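/- Let (U_n)_{n≥0} be a SVLMC defined by a probabilized context tree (T,(q_c)_{c∈C}) and let π be any stationary probability measure on L. Then for every finite word w over A and every letter α ∈ A, π(wα) = π(w)·q_{pref(w)}(α). -/

import Mathlib

open MeasureTheory
open ProbabilityTheory (Kernel IsMarkovKernel)
open scoped ENNReal

namespace VLMC

/-- Left-infinite sequences over the alphabet `{0,1}`; `s 0` is the rightmost
(most recent) letter, `s 1` the one before it, etc. -/
abbrev L : Type := ℕ → Bool

/-- Append the letter `b` on the right of the left-infinite sequence `s`. -/
def extend (b : Bool) (s : L) : L := fun n => match n with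
  | 0 => b
  | k + 1 => s k

/-- Sequences whose letters, read from the rightmost one leftwards, start with `u`. -/
def cylRev (u : List Bool) : Set L := {s | ∀ i < u.length, s i = u.getD i false}

/-- The cylinder `Lw` of left-infinite sequences admitting the finite word `w` as a suffix. -/
def cyl (w : List Bool) : Set L := cylRev w.reverse

/-- A (saturated) context tree: a prefix-closed set of finite words containing the
empty word, in which every node having one child has both children. A node
`[α₁, …, α_N]` corresponds to the word `α₁…α_N`, matched against a left-infinite
sequence `s` via `s 0 = α₁, …, s (N-1) = α_N`. -/
def IsContextTree (T : List Bool → Prop) : Prop :=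
  T [] ∧ (∀ u b, T (u ++ [b]) → T u) ∧ (∀ u b, T (u ++ [b]) → T (u ++ [!b]))

/-- Finite leaves (finite contexts) of a context tree. -/
def IsLeaf (T : List Bool → Prop) (c : List Bool) : Prop :=
  T c ∧ ∀ b, ¬ T (c ++ [b])

/-- Infinite leaves (infinite contexts), seen as the left-infinite sequences they match. -/
def IsInfLeaf (T : List Bool → Prop) (s : L) : Prop :=
  ∀ n, T (List.ofFn fun i : Fin n => s i)

/-- `κ` is the transition kernel of the VLMC associated with the probabilized
context tree `(T, qF, qI)` : from a state `s` whose context is the finite leaf `c`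
(resp. an infinite leaf), a letter `α` is appended on the right with probability
`qF c α` (resp. `qI s α`). -/
def IsVLMCKernel (T : List Bool → Prop) (qF : List Bool → Bool → ℝ≥0∞)
    (qI : L → Bool → ℝ≥0∞) (κ : Kernel L L) : Prop :=
  (∀ c, IsLeaf T c → ∀ s ∈ cylRev c,
      κ s = qF c false • Measure.dirac (extend false s)
          + qF c true • Measure.dirac (extend true s)) ∧
  (∀ s, IsInfLeaf T s →
      κ s = qI s false • Measure.dirac (extend false s)
          + qI s true • Measure.dirac (extend true s))

/-- `π` is a stationary (invariant) probability measure for the kernel `κ`. -/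
def IsStationary (κ : Kernel L L) (π : Measure L) : Prop :=
  ∀ B : Set L, MeasurableSet B → π B = ∫⁻ s, κ s B ∂π

lemma measurableSet_cylRev (u : List Bool) : MeasurableSet (cylRev u) := by
  have : cylRev u = ⋂ i ∈ Set.Iio u.length, (fun s : L => s i) ⁻¹' {u.getD i false} := by
    ext s; simp [cylRev]
  rw [this]
  exact MeasurableSet.biInter (Set.to_countable _)
    (fun i _ => (measurable_pi_apply i) (MeasurableSet.singleton _))

lemma measurableSet_cyl (w : List Bool) : MeasurableSet (cyl w) :=
  measurableSet_cylRev _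

lemma mem_extend_cyl_iff (w : List Bool) (b α : Bool) (s : L) :
    extend α s ∈ cyl (w ++ [b]) ↔ α = b ∧ s ∈ cyl w := by
  have hrev : (w ++ [b]).reverse = b :: w.reverse := by simp
  constructor
  · intro h
    have h0 := h 0 (by simp [hrev])
    simp [hrev, extend] at h0
    refine ⟨h0, fun i hi => ?_⟩
    have := h (i + 1) (by simp [hrev] at *; omega)
    simpa [hrev, extend] using this
  · rintro ⟨rfl, hs⟩ i hi
    cases i with
    | zero => simp [hrev, extend]
    | succ j =>
      simp only [hrev, List.length_cons] at hi
      have := hs j (by simpa using Nat.lt_of_succ_lt_succ hi)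
      simpa [hrev, extend] using this

lemma cylRev_anti {c u : List Bool} (h : c <+: u) : cylRev u ⊆ cylRev c := by
  obtain ⟨t, rfl⟩ := h
  intro s hs i hi
  have := hs i (by simp; omega)
  rw [this]
  rw [List.getD_eq_getElem _ _ (by simp; omega), List.getD_eq_getElem _ _ hi]
  exact List.getElem_append_left hi

/-- Every state lies in the cylinder of a finite leaf, or is an infinite leaf. -/
lemma exists_leaf {T : List Bool → Prop} (hT : IsContextTree T) (s : L) :
    (∃ c, IsLeaf T c ∧ s ∈ cylRev c) ∨ IsInfLeaf T s := by
  classical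
  by_cases h : ∀ n, T (List.ofFn fun i : Fin n => s i)
  · exact Or.inr h
  · push_neg at h
    left
    have hex : ∃ n, ¬ T (List.ofFn fun i : Fin n => s i) := h
    obtain ⟨m, hm⟩ : ∃ m, Nat.find hex = m + 1 := by
      refine ⟨Nat.find hex - 1, ?_⟩
      have : Nat.find hex ≠ 0 := by
        intro h0
        have := Nat.find_spec hex
        rw [h0] at this
        exact this (by simpa using hT.1)
      omega
    set c : List Bool := List.ofFn fun i : Fin m => s i with hc
    have hTc : T c := by
      have := Nat.find_min hex (by omega : m < Nat.find hex)
      exact of_not_not this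
    have hsucc : (List.ofFn fun i : Fin (m+1) => s i) = c ++ [s m] := by
      rw [List.ofFn_succ']
      simp [hc, List.concat_eq_append]
    have h1 : ¬ T (c ++ [s m]) := by
      rw [← hsucc]
      have := Nat.find_spec hex
      rwa [hm] at this
    have h2 : ¬ T (c ++ [!(s m)]) := fun ht => h1 (by simpa using hT.2.2 c (!(s m)) ht)
    refine ⟨c, ⟨hTc, fun b => ?_⟩, fun i hi => ?_⟩
    · have : b = s m ∨ b = !(s m) := by cases b <;> cases hsm : s m <;> simp
      rcases this with rfl | rfl
      · exact h1
      · exact h2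
    · simp only [hc, List.length_ofFn] at hi
      rw [List.getD_eq_getElem _ _ (by simpa [hc] using hi)]
      simp [hc]

/-- Value of a two-point combination measure on the cylinder `cyl (w ++ [b])`. -/
lemma comb_apply (a a' : ℝ≥0∞) (s : L) (w : List Bool) (b : Bool) :
    (a • Measure.dirac (extend false s) + a' • Measure.dirac (extend true s)) (cyl (w ++ [b]))
    = Set.indicator (cyl w) (fun _ => bif b then a' else a) s := by
  have hB := measurableSet_cyl (w ++ [b])
  rw [Measure.add_apply, Measure.smul_apply, Measure.smul_apply,
    Measure.dirac_apply' _ hB, Measure.dirac_apply' _ hB]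
  by_cases hs : s ∈ cyl w
  · cases b <;> simp [Set.indicator_apply, hs, mem_extend_cyl_iff]
  · simp [Set.indicator_apply, hs, mem_extend_cyl_iff]


/-- For a SVLMC with stationary probability measure `π`,
for every finite word `w` and letter `α`, `π(wα) = π(w) q_{pref(w)}(α)`.
The two cases of the extended prefix function are spelled out: either the
reversed word `w̄` lies strictly above or at a finite context `c` (i.e. `c̄` is a
suffix of `w`), and then `q_{pref(w)} = q_c`; or `w̄` is an internal node of the
tree, and then `q_{w̄}(α)` is `π(wα)/π(w)` if `π(w) ≠ 0`, and `0` otherwise. -/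
theorem stationary_step
    (T : List Bool → Prop) (qF : List Bool → Bool → ℝ≥0∞) (qI : L → Bool → ℝ≥0∞)
    (hT : IsContextTree T)
    (hcount : Set.Countable {s : L | IsInfLeaf T s})
    (hqF : ∀ c, IsLeaf T c → qF c false + qF c true = 1)
    (hqI : ∀ s, IsInfLeaf T s → qI s false + qI s true = 1)
    (κ : Kernel L L) [IsMarkovKernel κ] (hκ : IsVLMCKernel T qF qI κ)
    (π : Measure L) [IsProbabilityMeasure π] (hπ : IsStationary κ π)
    (w : List Bool) (b : Bool) :
    (∀ c, IsLeaf T c → c <+: w.reverse →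
        π (cyl (w ++ [b])) = π (cyl w) * qF c b) ∧
    (T w.reverse → (∃ b', T (w.reverse ++ [b'])) →
        π (cyl (w ++ [b])) =
          π (cyl w) * (if π (cyl w) = 0 then 0
            else π (cyl (w ++ [b])) / π (cyl w))) := by
  have hBwb := measurableSet_cyl (w ++ [b])
  have hBw := measurableSet_cyl w
  constructor
  · intro c hc hpre
    have key : ∀ s : L, κ s (cyl (w ++ [b]))
        = Set.indicator (cyl w) (fun _ => qF c b) s := by
      intro s
      by_cases hs : s ∈ cyl w
      · have hsc : s ∈ cylRev c := cylRev_anti hpre hs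
        rw [hκ.1 c hc s hsc, comb_apply]
        cases b <;> simp [Set.indicator_apply, hs]
      · rcases exists_leaf hT s with ⟨c', hc', hsc'⟩ | hinf
        · rw [hκ.1 c' hc' s hsc', comb_apply]; simp [Set.indicator_apply, hs]
        · rw [hκ.2 s hinf, comb_apply]; simp [Set.indicator_apply, hs]
    rw [hπ _ hBwb, lintegral_congr key, lintegral_indicator hBw]
    simp [mul_comm]
  · intro _ _
    by_cases h0 : π (cyl w) = 0
    · rw [if_pos h0, mul_zero]
      have bound : ∀ s : L, κ s (cyl (w ++ [b]))
          ≤ Set.indicator (cyl w) (fun _ => (1 : ℝ≥0∞)) s := by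
        intro s
        by_cases hs : s ∈ cyl w
        · simpa [Set.indicator_apply, hs] using prob_le_one (μ := κ s) (s := cyl (w ++ [b]))
        · have hform : ∃ a a' : ℝ≥0∞,
              κ s = a • Measure.dirac (extend false s) + a' • Measure.dirac (extend true s) := by
            rcases exists_leaf hT s with ⟨c', hc', hsc'⟩ | hinf
            · exact ⟨_, _, hκ.1 c' hc' s hsc'⟩
            · exact ⟨_, _, hκ.2 s hinf⟩
          obtain ⟨a, a', hform⟩ := hform
          rw [hform, comb_apply]
          simp [Set.indicator_apply, hs]
      have hle : π (cyl (w ++ [b])) ≤ 0 := by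
        rw [hπ _ hBwb]
        calc ∫⁻ s, κ s (cyl (w ++ [b])) ∂π
            ≤ ∫⁻ s, Set.indicator (cyl w) (fun _ => (1 : ℝ≥0∞)) s ∂π := lintegral_mono bound
          _ = π (cyl w) := by rw [lintegral_indicator hBw]; simp
          _ = 0 := h0
      exact le_antisymm hle (zero_le)
    · rw [if_neg h0, mul_comm, ENNReal.div_mul_cancel h0 (measure_ne_top π _)]

end VLMC
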